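/- arXiv:1008.0264 — 2 statements merged into one kernel-verified Lean document; each statement's English description precedes it below -/
import Mathlib

section
/- Let E be a finite alphabet, α ∈ (0,1), and β : E → (0,∞) injective with δ_min = min_{e≠f}|β(e)−β(f)| and δ_max = max_{e,f}|β(e)−β(f)|. For s > 0 define φ_s : E^ℕ → ℝ by φ_s(x) = Σ_{j≥0} β(x_j)·α^{sj}. Then for all x,y, |φ_s(x) − φ_s(y)| ≤ (δ_max/(1−α^s))·ρ(x,y)^s, where ρ(x,y) = α^{|x∧y|}. Moreover, if s > log(δ_min/(δ_min+δ_max))/log(α), then also |φ_s(x) − φ_s(y)| ≥ c₋·ρ(x,y)^s with c₋ = (δ_min − α^s(δ_min+δ_max))/(1−α^s) > 0; hence φ_s is a bi-Hölder embedding of (E^ℕ, ρ) into ℝ. -/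
open Classical

/-- The length of the longest common prefix of two sequences. -/
noncomputable def lcp {E : Type*} (x y : ℕ → E) : ℕ := sInf {n | x n ≠ y n}

/-- The self-similar ultrametric `ρ(x,y) = α^{|x∧y|}` on `E^ℕ`. -/
noncomputable def rho {E : Type*} (α : ℝ) (x y : ℕ → E) : ℝ :=
  if x = y then 0 else α ^ lcp x y

/-- The Hölder embedding `φ_s(x) = Σ_{j≥0} β(x_j)·α^{sj}` of `E^ℕ` into `ℝ`. -/
noncomputable def phiS {E : Type*} (α s : ℝ) (β : E → ℝ) (x : ℕ → E) : ℝ :=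
  ∑' j : ℕ, β (x j) * (α ^ s) ^ j

/-- Hölder estimates for `φ_s`: always `|φ_s(x) − φ_s(y)| ≤ (δ_max/(1−α^s))·ρ(x,y)^s`, and if
`s > log(δ_min/(δ_min+δ_max))/log α` then also the lower bound with
`c₋ = (δ_min − α^s(δ_min+δ_max))/(1−α^s) > 0`; hence `φ_s` is a bi-Hölder embedding of
`(E^ℕ, ρ)` into `ℝ`. -/
theorem stmt13 {E : Type*} [Fintype E] (α : ℝ) (hα : α ∈ Set.Ioo (0 : ℝ) 1)
    (s : ℝ) (hs : 0 < s)
    (β : E → ℝ) (hβpos : ∀ e, 0 < β e) (hβinj : Function.Injective β)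
    (δmin δmax : ℝ) (hδminpos : 0 < δmin)
    (hδmin : ∀ e f : E, e ≠ f → δmin ≤ |β e - β f|)
    (hδmax : ∀ e f : E, |β e - β f| ≤ δmax) :
    (∀ x y : ℕ → E,
      |phiS α s β x - phiS α s β y| ≤ δmax / (1 - α ^ s) * rho α x y ^ s) ∧
    (Real.log (δmin / (δmin + δmax)) / Real.log α < s →
      0 < (δmin - α ^ s * (δmin + δmax)) / (1 - α ^ s) ∧
      (∀ x y : ℕ → E,
        (δmin - α ^ s * (δmin + δmax)) / (1 - α ^ s) * rho α x y ^ s ≤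
          |phiS α s β x - phiS α s β y|) ∧
      Function.Injective (phiS α s β)) := by

  obtain ⟨hα0, hα1⟩ := hα
  have hr0 : (0:ℝ) < α ^ s := Real.rpow_pos_of_pos hα0 s
  have hr1 : α ^ s < 1 := Real.rpow_lt_one hα0.le hα1 hs
  have h1r : (0:ℝ) < 1 - α ^ s := by linarith
  set r : ℝ := α ^ s with hrdef
  -- key two-sided estimate for distinct sequences
  have key : ∀ x y : ℕ → E, x ≠ y →
      |phiS α s β x - phiS α s β y| ≤ δmax / (1 - r) * r ^ lcp x y ∧
      (δmin - r * (δmin + δmax)) / (1 - r) * r ^ lcp x y ≤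
        |phiS α s β x - phiS α s β y| := by
    intro x y hxy
    have hδmax0 : 0 ≤ δmax := by simpa using hδmax (x 0) (x 0)
    set n := lcp x y with hn
    obtain ⟨m, hm⟩ := Function.ne_iff.mp hxy
    have hS : {k | x k ≠ y k}.Nonempty := ⟨m, hm⟩
    have hmem : x n ≠ y n := Nat.sInf_mem hS
    have hlt : ∀ k < n, x k = y k := by
      intro k hk
      by_contra h
      exact absurd (Nat.sInf_le h) (not_le.mpr hk)
    have hgeo : Summable (fun j : ℕ => r ^ j) := summable_geometric_of_lt_one hr0.le hr1
    have hsum : ∀ z : ℕ → E, Summable (fun j => β (z j) * r ^ j) := by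
      intro z
      refine Summable.of_nonneg_of_le
        (fun j => mul_nonneg (hβpos _).le (pow_nonneg hr0.le j)) (fun j => ?_)
        (hgeo.mul_left (β (z 0) + δmax))
      have h1 : β (z j) ≤ β (z 0) + δmax := by
        have h2 := (abs_le.mp (hδmax (z j) (z 0))).2
        linarith
      exact mul_le_mul_of_nonneg_right h1 (pow_nonneg hr0.le j)
    set f : ℕ → ℝ := fun j => (β (x j) - β (y j)) * r ^ j with hf
    have hsf : Summable f := by
      simpa [hf, sub_mul] using (hsum x).sub (hsum y)
    have hdiff : phiS α s β x - phiS α s β y = ∑' j, f j := by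
      simp only [phiS, hf, sub_mul, ← hrdef]
      exact (Summable.tsum_sub (hsum x) (hsum y)).symm
    set d : ℕ → ℝ := fun i => β (x (i + n)) - β (y (i + n)) with hd
    have hsd : Summable (fun i => d i * r ^ i) := by
      simpa [hd, sub_mul] using ((hsum (fun i => x (i + n))).sub (hsum (fun i => y (i + n))))
    have hshift : ∑' j, f j = (∑' i, d i * r ^ i) * r ^ n := by
      have h0 := Summable.sum_add_tsum_nat_add (f := f) n hsf
      have hz : ∑ i ∈ Finset.range n, f i = 0 := by
        refine Finset.sum_eq_zero fun i hi => ?_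
        have := hlt i (Finset.mem_range.mp hi)
        simp [hf, this]
      have htail : ∀ i : ℕ, f (i + n) = (d i * r ^ i) * r ^ n := by
        intro i; simp only [hf, hd, pow_add]; ring
      rw [← h0, hz, zero_add, tsum_congr htail, tsum_mul_right]
    set T := ∑' i, d i * r ^ i with hT
    set Tail := ∑' i, d (i + 1) * r ^ (i + 1) with hTail
    have hT0 : T = d 0 + Tail := by
      have := Summable.tsum_eq_zero_add hsd
      simpa using this
    have hd0lo : δmin ≤ |d 0| := by
      refine hδmin _ _ ?_
      simpa [hd] using hmem
    have hd0hi : |d 0| ≤ δmax := hδmax _ _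
    have htailbd : |Tail| ≤ δmax * r / (1 - r) := by
      have hhs : HasSum (fun i : ℕ => δmax * r * r ^ i) (δmax * r * (1 - r)⁻¹) :=
        (hasSum_geometric_of_lt_one hr0.le hr1).mul_left (δmax * r)
      have hhs' : HasSum (fun i : ℕ => δmax * r ^ (i + 1)) (δmax * r / (1 - r)) := by
        have he : (fun i : ℕ => δmax * r * r ^ i) = fun i : ℕ => δmax * r ^ (i + 1) := by
          funext i; rw [pow_succ]; ring
        rw [← he, div_eq_mul_inv]
        exact hhs
      have hb : ∀ i : ℕ, ‖d (i + 1) * r ^ (i + 1)‖ ≤ δmax * r ^ (i + 1) := by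
        intro i
        rw [Real.norm_eq_abs, abs_mul, abs_pow, abs_of_pos hr0]
        exact mul_le_mul_of_nonneg_right (hδmax _ _) (pow_nonneg hr0.le _)
      simpa using tsum_of_norm_bounded hhs' hb
    have hTup : |T| ≤ δmax / (1 - r) := by
      have h1 : |T| ≤ |d 0| + |Tail| := by rw [hT0]; exact abs_add_le _ _
      have h2 : δmax + δmax * r / (1 - r) = δmax / (1 - r) := by
        field_simp; ring
      linarith
    have hTlo : (δmin - r * (δmin + δmax)) / (1 - r) ≤ |T| := by
      have h1 : |d 0| - |Tail| ≤ |T| := by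
        have := abs_sub_abs_le_abs_sub (d 0) (-Tail)
        simpa [hT0, sub_neg_eq_add] using this
      have h2 : δmin - δmax * r / (1 - r) = (δmin - r * (δmin + δmax)) / (1 - r) := by
        field_simp; ring
      linarith
    have habs : |phiS α s β x - phiS α s β y| = |T| * r ^ n := by
      rw [hdiff, hshift, abs_mul, abs_pow, abs_of_pos hr0]
    have hrn : (0:ℝ) ≤ r ^ n := pow_nonneg hr0.le n
    constructor
    · rw [habs]
      exact mul_le_mul_of_nonneg_right hTup hrn
    · rw [habs]
      exact mul_le_mul_of_nonneg_right hTlo hrn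
  have hrho : ∀ x y : ℕ → E, x ≠ y → rho α x y ^ s = r ^ lcp x y := by
    intro x y hxy
    rw [rho, if_neg hxy, hrdef, ← Real.rpow_natCast α (lcp x y),
      ← Real.rpow_natCast (α ^ s) (lcp x y), ← Real.rpow_mul hα0.le, ← Real.rpow_mul hα0.le,
      mul_comm]
  refine ⟨?_, ?_⟩
  · intro x y
    by_cases hxy : x = y
    · subst hxy
      simp [rho, Real.zero_rpow hs.ne']
    · rw [hrho x y hxy]
      exact (key x y hxy).1
  · intro hcond
    have hlogα : Real.log α < 0 := Real.log_neg hα0 hα1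
    have hc : 0 < δmin - r * (δmin + δmax) := by
      by_cases hpos : 0 < δmin + δmax
      · have hq0 : 0 < δmin / (δmin + δmax) := div_pos hδminpos hpos
        have h1 : s * Real.log α < Real.log (δmin / (δmin + δmax)) :=
          (div_lt_iff_of_neg hlogα).mp hcond
        have h2 : Real.log r < Real.log (δmin / (δmin + δmax)) := by
          rw [hrdef, Real.log_rpow hα0]
          exact h1
        have h3 : r < δmin / (δmin + δmax) := by
          have := Real.exp_lt_exp.mpr h2
          rwa [Real.exp_log hr0, Real.exp_log hq0] at this
        have h4 : r * (δmin + δmax) < δmin := (lt_div_iff₀ hpos).mp h3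
        linarith
      · push_neg at hpos
        nlinarith [hr0]
    have hcpos : 0 < (δmin - r * (δmin + δmax)) / (1 - r) := div_pos hc h1r
    refine ⟨hcpos, ?_, ?_⟩
    · intro x y
      by_cases hxy : x = y
      · subst hxy
        simp [rho, Real.zero_rpow hs.ne']
      · rw [hrho x y hxy]
        exact (key x y hxy).2
    · intro x y hphi
      by_contra hxy
      have h1 := (key x y hxy).2
      rw [sub_eq_zero.mpr hphi] at h1
      have h2 : 0 < (δmin - r * (δmin + δmax)) / (1 - r) * r ^ lcp x y :=
        mul_pos hcpos (pow_pos hr0 _)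
      simp at h1
      linarith
end

section
/- Every self-similar ultrametric Cantor set admits a bi-Hölder embedding into the real line: there exist s > 0, an injective continuous map φ : C → ℝ, and constants 0 < c₋ ≤ c₊ such that c₋·ρ(x,y)^s ≤ |φ(x) − φ(y)| ≤ c₊·ρ(x,y)^s for all x, y. -/
/-- The space of infinite paths of a stationary Bratteli diagram with edge set `Ed`,
vertex set `V`, and source/range maps `σ, τ : Ed → V`: sequences of composable edges. -/
def SPath (Ed : Type) {V : Type} (σ τ : Ed → V) : Type :=
  {x : ℕ → Ed // ∀ n, τ (x n) = σ (x (n + 1))}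

/-- The length of the longest common prefix of two infinite paths. -/
noncomputable def slcp {Ed V : Type} {σ τ : Ed → V} (x y : SPath Ed σ τ) : ℕ :=
  sInf {n | x.1 n ≠ y.1 n}

set_option maxHeartbeats 1000000 in
/-- Every self-similar ultrametric Cantor set (the path space of a stationary Bratteli
diagram with ultrametric `ρ(x,y) = a_{x∧y}·α^{|x∧y|}`, weights uniformly bounded away from
`0` and `∞`) admits a bi-Hölder embedding into the real line: there are `t > 0`, an injective
continuous `φ : C → ℝ` and `0 < c₋ ≤ c₊` with
`c₋·ρ(x,y)^t ≤ |φ(x) − φ(y)| ≤ c₊·ρ(x,y)^t`. -/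
theorem stmt14 {V Ed : Type} [Fintype Ed] [Nonempty Ed] (σ τ : Ed → V)
    (α : ℝ) (hα : α ∈ Set.Ioo (0 : ℝ) 1)
    (a : SPath Ed σ τ → ℕ → ℝ) (a₁ a₂ : ℝ) (ha₁ : 0 < a₁)
    (hab : ∀ x n, a x n ∈ Set.Icc a₁ a₂)
    (hagree : ∀ x y : SPath Ed σ τ, ∀ n, (∀ i < n, x.1 i = y.1 i) → a x n = a y n)
    [MetricSpace (SPath Ed σ τ)]
    (hdist : ∀ x y : SPath Ed σ τ, x ≠ y → dist x y = a x (slcp x y) * α ^ slcp x y) :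
    ∃ t : ℝ, 0 < t ∧ ∃ φ : SPath Ed σ τ → ℝ, Continuous φ ∧ Function.Injective φ ∧
      ∃ cm cp : ℝ, 0 < cm ∧ cm ≤ cp ∧
        ∀ x y : SPath Ed σ τ,
          cm * dist x y ^ t ≤ |φ x - φ y| ∧ |φ x - φ y| ≤ cp * dist x y ^ t := by
  obtain ⟨hα0, hα1⟩ := hα
  set N : ℕ := Fintype.card Ed with hNdef
  have hN : 1 ≤ N := Fintype.card_pos
  have hNR : (1 : ℝ) ≤ N := by exact_mod_cast hN
  obtain ⟨m, hm⟩ := exists_pow_lt_of_lt_one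
    (show (0:ℝ) < 1/(4*N) by positivity) hα1
  set r : ℝ := α ^ m with hrdef
  have hr0 : 0 < r := pow_pos hα0 m
  have hrsmall : r < 1/(4*N) := hm
  have hrq : r < 1/4 := lt_of_lt_of_le hrsmall (by
    rw [div_le_div_iff₀ (by positivity) (by norm_num)]
    nlinarith)
  have hr1 : r < 1 := by linarith
  have hm1 : 1 ≤ m := by
    rcases Nat.eq_zero_or_pos m with h | h
    · exfalso; rw [h, pow_zero] at hrdef; rw [hrdef] at hr1; linarith
    · exact h
  -- digits
  let e := Fintype.equivFin Ed
  let β : Ed → ℝ := fun v => ((e v : ℕ) : ℝ)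
  have hβ0 : ∀ v, 0 ≤ β v := fun v => Nat.cast_nonneg _
  have hβB : ∀ v, β v ≤ (N : ℝ) - 1 := by
    intro v
    have : (e v : ℕ) ≤ N - 1 := Nat.le_sub_one_of_lt (e v).2
    have h2 : ((e v : ℕ) : ℝ) ≤ ((N - 1 : ℕ) : ℝ) := by exact_mod_cast this
    calc β v ≤ ((N - 1 : ℕ) : ℝ) := h2
      _ ≤ (N : ℝ) - 1 := by
          rw [Nat.cast_sub hN]; norm_num
  have hβsep : ∀ v w : Ed, v ≠ w → 1 ≤ |β v - β w| := by
    intro v w hvw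
    have h1 : (e v : ℕ) ≠ (e w : ℕ) := by
      intro h
      exact hvw (e.injective (Fin.ext h))
    have h2 : ((e v : ℕ) : ℤ) - ((e w : ℕ) : ℤ) ≠ 0 := by
      intro h
      apply h1
      omega
    have h3 : (1 : ℤ) ≤ |((e v : ℕ) : ℤ) - ((e w : ℕ) : ℤ)| := Int.one_le_abs h2
    have h4 : (1 : ℝ) ≤ |(((e v : ℕ) : ℤ) : ℝ) - (((e w : ℕ) : ℤ) : ℝ)| := by
      rw [← Int.cast_sub, ← Int.cast_abs]
      exact_mod_cast h3
    simpa using h4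
  -- the embedding
  have hgeo : Summable (fun j : ℕ => r ^ j) := summable_geometric_of_lt_one hr0.le hr1
  have hsum : ∀ x : SPath Ed σ τ, Summable (fun j => β (x.1 j) * r ^ j) := by
    intro x
    apply Summable.of_nonneg_of_le (fun j => by positivity)
      (fun j => ?_) (hgeo.mul_left ((N : ℝ) - 1))
    exact mul_le_mul_of_nonneg_right (hβB _) (by positivity)
  set φ : SPath Ed σ τ → ℝ := fun x => ∑' j, β (x.1 j) * r ^ j with hφdef
  -- key estimate
  have key : ∀ x y : SPath Ed σ τ, x ≠ y →
      r ^ slcp x y / 2 ≤ |φ x - φ y| ∧ |φ x - φ y| ≤ (N : ℝ) * r ^ slcp x y := by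
    intro x y hxy
    set n := slcp x y with hn
    have hne : ∃ k, x.1 k ≠ y.1 k := by
      by_contra h
      push_neg at h
      exact hxy (Subtype.ext (funext h))
    have hmem : x.1 n ≠ y.1 n := Nat.sInf_mem hne
    have hlt : ∀ i < n, x.1 i = y.1 i := by
      intro i hi
      have := Nat.notMem_of_lt_sInf hi
      simpa using this
    set g : ℕ → ℝ := fun j => (β (x.1 j) - β (y.1 j)) * r ^ j with hgdef
    have hg : Summable g := by
      have : g = fun j => β (x.1 j) * r ^ j - β (y.1 j) * r ^ j := by
        funext j; simp [hgdef, sub_mul]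
      rw [this]
      exact (hsum x).sub (hsum y)
    have hφg : φ x - φ y = ∑' j, g j := by
      rw [hφdef]
      simp only
      rw [← Summable.tsum_sub (hsum x) (hsum y)]
      congr 1
      funext j
      simp [hgdef, sub_mul]
    -- split off the first n terms (which vanish) and the n-th term
    have hsplit : ∑' j, g j = g n + ∑' k, g (k + 1 + n) := by
      have h1 := (Summable.sum_add_tsum_nat_add n hg).symm
      have h2 : ∑ i ∈ Finset.range n, g i = 0 := by
        apply Finset.sum_eq_zero
        intro i hi
        have := hlt i (Finset.mem_range.mp hi)
        simp [hgdef, this]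
      rw [h2, zero_add] at h1
      have hg' : Summable (fun k => g (k + n)) := hg.comp_injective (add_left_injective n)
      rw [h1, Summable.tsum_eq_zero_add hg']
      simp [add_right_comm]
    -- bounds on coefficients
    have hcoef : ∀ j, |β (x.1 j) - β (y.1 j)| ≤ (N : ℝ) - 1 := by
      intro j
      rw [abs_le]
      constructor <;> [nlinarith [hβ0 (x.1 j), hβB (y.1 j)]; nlinarith [hβ0 (y.1 j), hβB (x.1 j)]]
    -- tail bound
    have htail : |∑' k, g (k + 1 + n)| ≤ r ^ n / 2 := by
      have habs : ∀ k : ℕ, |g (k + 1 + n)| ≤ ((N : ℝ) - 1) * r ^ (k + 1 + n) := by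
        intro k
        rw [hgdef]
        simp only
        rw [abs_mul, abs_pow, abs_of_nonneg hr0.le]
        exact mul_le_mul_of_nonneg_right (hcoef _) (by positivity)
      have hsumtail : Summable (fun k => ((N : ℝ) - 1) * r ^ (k + 1 + n)) := by
        have : (fun k : ℕ => ((N : ℝ) - 1) * r ^ (k + 1 + n))
            = fun k : ℕ => (((N : ℝ) - 1) * r ^ (1 + n)) * r ^ k := by
          funext k; ring
        rw [this]
        exact hgeo.mul_left _
      have hgtail : Summable (fun k => g (k + 1 + n)) := by
        apply hg.comp_injective
        intro u v huv
        dsimp only at huv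
        omega
      have hgabs : Summable (fun k => |g (k + 1 + n)|) := hgtail.abs
      calc |∑' k, g (k + 1 + n)| ≤ ∑' k, |g (k + 1 + n)| := by
            have h5 := norm_tsum_le_tsum_norm (f := fun k => g (k + 1 + n))
              (by simpa [Real.norm_eq_abs] using hgabs)
            simpa [Real.norm_eq_abs] using h5
        _ ≤ ∑' k, ((N : ℝ) - 1) * r ^ (k + 1 + n) := by
            exact Summable.tsum_le_tsum habs hgtail.abs hsumtail
        _ = (((N : ℝ) - 1) * r ^ (1 + n)) * (1 - r)⁻¹ := by
            have : (fun k : ℕ => ((N : ℝ) - 1) * r ^ (k + 1 + n))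
                = fun k : ℕ => (((N : ℝ) - 1) * r ^ (1 + n)) * r ^ k := by
              funext k; ring
            rw [this, tsum_mul_left, tsum_geometric_of_lt_one hr0.le hr1]
        _ ≤ r ^ n / 2 := by
            rw [pow_add, pow_one]
            have h1 : (1 - r)⁻¹ ≤ 2 := by
              rw [inv_le_comm₀ (by linarith) (by norm_num)]
              linarith
            have h2 : ((N : ℝ) - 1) * r ≤ 1/4 := by
              have : ((N : ℝ) - 1) * r ≤ (N : ℝ) * r := by nlinarith
              have h3 : (N : ℝ) * r ≤ 1/4 := by
                have := hrsmall
                rw [lt_div_iff₀ (by positivity)] at this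
                nlinarith
              linarith
            have h3 : 0 ≤ ((N:ℝ) - 1) * r := by nlinarith
            have h4 : (0:ℝ) < (1 - r)⁻¹ := inv_pos.mpr (by linarith)
            have hrn : (0:ℝ) ≤ r ^ n := by positivity
            calc ((N : ℝ) - 1) * (r * r ^ n) * (1 - r)⁻¹
                = (((N:ℝ) - 1) * r) * (1-r)⁻¹ * r ^ n := by ring
              _ ≤ (1/4) * 2 * r ^ n := by
                  apply mul_le_mul_of_nonneg_right _ hrn
                  calc (((N:ℝ) - 1) * r) * (1-r)⁻¹ ≤ (1/4) * (1-r)⁻¹ :=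
                        mul_le_mul_of_nonneg_right h2 h4.le
                    _ ≤ (1/4) * 2 := by linarith
              _ = r ^ n / 2 := by ring
    -- head term
    have hhead : r ^ n ≤ |g n| ∧ |g n| ≤ ((N : ℝ) - 1) * r ^ n := by
      constructor
      · rw [hgdef]
        simp only
        rw [abs_mul, abs_pow, abs_of_nonneg hr0.le]
        have := hβsep _ _ hmem
        nlinarith [pow_pos hr0 n]
      · rw [hgdef]
        simp only
        rw [abs_mul, abs_pow, abs_of_nonneg hr0.le]
        exact mul_le_mul_of_nonneg_right (hcoef _) (by positivity)
    rw [hφg, hsplit]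
    constructor
    · calc r ^ n / 2 = r ^ n - r ^ n / 2 := by ring
        _ ≤ |g n| - |∑' k, g (k + 1 + n)| := by
            have := hhead.1; linarith [htail]
        _ ≤ |g n + ∑' k, g (k + 1 + n)| := by
            have := abs_sub_abs_le_abs_sub (g n) (-(∑' k, g (k + 1 + n)))
            simp only [abs_neg, sub_neg_eq_add] at this
            exact this
    · calc |g n + ∑' k, g (k + 1 + n)| ≤ |g n| + |∑' k, g (k + 1 + n)| := abs_add_le _ _
        _ ≤ ((N : ℝ) - 1) * r ^ n + r ^ n / 2 := add_le_add hhead.2 htail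
        _ ≤ (N : ℝ) * r ^ n := by nlinarith [pow_pos hr0 n]
  -- relate r ^ slcp to dist ^ m
  have hdistm : ∀ x y : SPath Ed σ τ, x ≠ y →
      a₁ ^ m * r ^ slcp x y ≤ dist x y ^ m ∧ dist x y ^ m ≤ a₂ ^ m * r ^ slcp x y := by
    intro x y hxy
    set n := slcp x y
    obtain ⟨hal, har⟩ := hab x n
    have hd : dist x y = a x n * α ^ n := hdist x y hxy
    have hpow : (a x n * α ^ n) ^ m = (a x n) ^ m * r ^ n := by
      rw [mul_pow, hrdef, ← pow_mul, ← pow_mul, Nat.mul_comm]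
    have h1 : a₁ ^ m ≤ (a x n) ^ m := pow_le_pow_left₀ ha₁.le hal m
    have h2 : (a x n) ^ m ≤ a₂ ^ m := pow_le_pow_left₀ (by linarith) har m
    rw [hd, hpow]
    have hrn : (0:ℝ) ≤ r ^ n := by positivity
    exact ⟨mul_le_mul_of_nonneg_right h1 hrn, mul_le_mul_of_nonneg_right h2 hrn⟩
  -- put it together
  rcases isEmpty_or_nonempty (SPath Ed σ τ) with hE | hNE
  · exact ⟨1, one_pos, fun _ => 0, continuous_const, fun x => (IsEmpty.false x).elim,
      1, 1, one_pos, le_refl 1, fun x => (IsEmpty.false x).elim⟩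
  set cm : ℝ := 1 / (2 * a₂ ^ m) with hcm
  set cp0 : ℝ := (N : ℝ) / a₁ ^ m with hcp0
  set cp : ℝ := max cm cp0 with hcp
  have ha₂ : 0 < a₂ := by
    obtain ⟨x⟩ := hNE
    obtain ⟨h1, h2⟩ := hab x 0
    linarith
  have hcm0 : 0 < cm := by rw [hcm]; positivity
  have hbnd : ∀ x y : SPath Ed σ τ,
      cm * dist x y ^ (m : ℝ) ≤ |φ x - φ y| ∧ |φ x - φ y| ≤ cp * dist x y ^ (m : ℝ) := by
    intro x y
    rcases eq_or_ne x y with rfl | hxy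
    · simp only [dist_self, sub_self, abs_zero]
      rw [Real.rpow_natCast, zero_pow (by omega)]
      simp
    · have hk := key x y hxy
      have hdm := hdistm x y hxy
      rw [Real.rpow_natCast]
      have ha2m : (0:ℝ) < a₂ ^ m := pow_pos ha₂ m
      have ha1m : (0:ℝ) < a₁ ^ m := pow_pos ha₁ m
      constructor
      · have : cm * dist x y ^ m ≤ cm * (a₂ ^ m * r ^ slcp x y) :=
          mul_le_mul_of_nonneg_left hdm.2 hcm0.le
        calc cm * dist x y ^ m ≤ cm * (a₂ ^ m * r ^ slcp x y) := this
          _ = r ^ slcp x y / 2 := by rw [hcm]; field_simp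
          _ ≤ |φ x - φ y| := hk.1
      · calc |φ x - φ y| ≤ (N : ℝ) * r ^ slcp x y := hk.2
          _ = cp0 * (a₁ ^ m * r ^ slcp x y) := by rw [hcp0]; field_simp
          _ ≤ cp0 * dist x y ^ m := mul_le_mul_of_nonneg_left hdm.1 (by rw [hcp0]; positivity)
          _ ≤ cp * dist x y ^ m := by
              apply mul_le_mul_of_nonneg_right (le_max_right _ _)
              positivity
  have hcont : Continuous φ := by
    rw [Metric.continuous_iff]
    intro x ε hε
    have hcp0' : 0 < cp := lt_of_lt_of_le hcm0 (le_max_left _ _)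
    refine ⟨min 1 (ε / cp), by positivity, fun y hy => ?_⟩
    have hd1 : dist y x < 1 := lt_of_lt_of_le hy (min_le_left _ _)
    have hd2 : dist y x < ε / cp := lt_of_lt_of_le hy (min_le_right _ _)
    have hb := (hbnd y x).2
    rw [Real.rpow_natCast] at hb
    have hpm : dist y x ^ m ≤ dist y x :=
      pow_le_of_le_one dist_nonneg hd1.le (by omega)
    calc dist (φ y) (φ x) = |φ y - φ x| := Real.dist_eq _ _
      _ ≤ cp * dist y x ^ m := hb
      _ ≤ cp * dist y x := mul_le_mul_of_nonneg_left hpm hcp0'.le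
      _ < cp * (ε / cp) := by
          apply mul_lt_mul_of_pos_left hd2 hcp0'
      _ = ε := by rw [mul_comm, div_mul_cancel₀ _ (ne_of_gt hcp0')]
  have hinj : Function.Injective φ := by
    intro x y hxyφ
    by_contra hxy
    have hb := (hbnd x y).1
    rw [hxyφ, sub_self, abs_zero] at hb
    have hd : 0 < dist x y := dist_pos.mpr hxy
    have : (0:ℝ) < cm * dist x y ^ (m:ℝ) := by
      apply mul_pos hcm0
      exact Real.rpow_pos_of_pos hd _
    exact absurd hb (not_le.mpr this)
  have hm0 : (0:ℝ) < (m : ℝ) := by exact_mod_cast hm1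
  exact ⟨(m : ℝ), hm0, φ, hcont, hinj, cm, cp, hcm0, le_max_left _ _, hbnd⟩
end
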